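/- arXiv:1302.5202 — 2 statements merged into one kernel-verified Lean document; each statement's English description precedes it below -/
import Mathlib

section
/- Let E be a measurable space, let F¹ and F² be (σ-finite) measures on E, let β ∈ [0,2], and let ψ : E → [0,∞) be a measurable function such that ∫_E ψ(x)^β F^l(dx) < ∞ and F^l({x : ψ(x) = 0}) = 0 for l = 1,2. Define φ_β(ε) := Σ_{l=1,2} ∫_{{x : ψ(x) ≤ ε}} ψ(x)^β F^l(dx) for ε > 0. Let p > 0 and let (ρ_n)_{n∈ℕ} be a sequence of positive real numbers with ρ_n → 0 as n → ∞. Then there exists a sequence (ε_n)_{n∈ℕ} of numbers with ε_n ∈ (0,1] for every n such that: (i) limsup_{n→∞} (ρ_n^{-1} ε_n²)^p · φ_β(ε_n) ≤ 1; (ii) φ_β(ε_n) → 0 as n → ∞; and (iii) √ρ_n / ε_n → 0 as n → ∞. -/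
open MeasureTheory Filter Topology

lemma epsaux_int {E : Type*} [MeasurableSpace E] (μ : Measure E) (β : ℝ)
    (ψ : E → ℝ) (hψmeas : Measurable ψ) (hψnonneg : ∀ x, 0 ≤ ψ x)
    (hint : Integrable (fun x => ψ x ^ β) μ)
    (hzero : μ {x | ψ x = 0} = 0) :
    Tendsto (fun k : ℕ => ∫ x in {x | ψ x ≤ 1 / (k + 1 : ℝ)}, ψ x ^ β ∂μ)
      atTop (𝓝 0) := by
  have hsm : ∀ k : ℕ, MeasurableSet {x | ψ x ≤ 1 / (k + 1 : ℝ)} := fun k =>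
    hψmeas measurableSet_Iic
  have h_anti : Antitone (fun k : ℕ => {x | ψ x ≤ 1 / (k + 1 : ℝ)}) := by
    intro i j hij x hx
    simp only [Set.mem_setOf_eq] at hx ⊢
    refine hx.trans ?_
    apply one_div_le_one_div_of_le (by positivity)
    have : (i : ℝ) ≤ j := Nat.cast_le.2 hij
    linarith
  have h := tendsto_setIntegral_of_antitone hsm h_anti ⟨0, hint.integrableOn⟩
  have hInter : (⋂ k : ℕ, {x | ψ x ≤ 1 / (k + 1 : ℝ)}) = {x | ψ x = 0} := by
    ext x
    simp only [Set.mem_iInter, Set.mem_setOf_eq]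
    constructor
    · intro hx
      refine le_antisymm ?_ (hψnonneg x)
      by_contra hpos
      push_neg at hpos
      obtain ⟨n, hn⟩ := exists_nat_one_div_lt hpos
      exact absurd (hx n) (not_le.2 hn)
    · intro hx k
      rw [hx]; positivity
  rw [hInter] at h
  have hz : ∫ x in {x | ψ x = 0}, ψ x ^ β ∂μ = 0 := by
    rw [Measure.restrict_eq_zero.2 hzero, integral_zero_measure]
  rwa [hz] at h

/-- Lemma `epsspecify`: choice of a truncation level sequence. -/
theorem stmt0
    {E : Type*} [MeasurableSpace E] (F : Fin 2 → Measure E)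
    (hσfin : ∀ l, SigmaFinite (F l))
    (β : ℝ) (hβ : β ∈ Set.Icc (0:ℝ) 2)
    (ψ : E → ℝ) (hψmeas : Measurable ψ) (hψnonneg : ∀ x, 0 ≤ ψ x)
    (hint : ∀ l, Integrable (fun x => ψ x ^ β) (F l))
    (hzero : ∀ l, F l {x | ψ x = 0} = 0)
    (φ : ℝ → ℝ)
    (hφ : ∀ ε, φ ε = ∑ l : Fin 2, ∫ x in {x | ψ x ≤ ε}, ψ x ^ β ∂(F l))
    (p : ℝ) (hp : 0 < p)
    (ρ : ℕ → ℝ) (hρpos : ∀ n, 0 < ρ n)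
    (hρ : Tendsto ρ atTop (𝓝 0)) :
    ∃ ε : ℕ → ℝ, (∀ n, ε n ∈ Set.Ioc (0:ℝ) 1) ∧
      Filter.limsup (fun n => ((ρ n)⁻¹ * (ε n) ^ 2) ^ p * φ (ε n)) atTop ≤ 1 ∧
      Tendsto (fun n => φ (ε n)) atTop (𝓝 0) ∧
      Tendsto (fun n => Real.sqrt (ρ n) / ε n) atTop (𝓝 0) := by
  classical
  -- basic properties of φ
  have hφnonneg : ∀ t, 0 ≤ φ t := by
    intro t
    rw [hφ]
    refine Finset.sum_nonneg fun l _ => ?_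
    exact setIntegral_nonneg (hψmeas measurableSet_Iic)
      (fun x _ => Real.rpow_nonneg (hψnonneg x) β)
  have hφmono : ∀ a b : ℝ, a ≤ b → φ a ≤ φ b := by
    intro a b hab
    rw [hφ, hφ]
    refine Finset.sum_le_sum fun l _ => ?_
    refine setIntegral_mono_set (hint l).integrableOn
      (Filter.Eventually.of_forall fun x => Real.rpow_nonneg (hψnonneg x) β) ?_
    exact HasSubset.Subset.eventuallyLE fun x hx => le_trans hx hab
  -- the grid
  set δ : ℕ → ℝ := fun k => 1 / (k + 1 : ℝ) with hδdef
  have hδpos : ∀ k, 0 < δ k := fun k => by positivity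
  have hδle1 : ∀ k, δ k ≤ 1 := by
    intro k
    rw [hδdef]
    rw [div_le_one (by positivity)]
    simp
  have hδ0 : Tendsto δ atTop (𝓝 0) := tendsto_one_div_add_atTop_nhds_zero_nat
  have hφδ : Tendsto (fun k => φ (δ k)) atTop (𝓝 0) := by
    have : ∀ k : ℕ, φ (δ k) = ∑ l : Fin 2, ∫ x in {x | ψ x ≤ 1 / (k + 1 : ℝ)},
        ψ x ^ β ∂(F l) := fun k => hφ _
    rw [show (0 : ℝ) = ∑ _l : Fin 2, (0:ℝ) by simp]
    refine Tendsto.congr (fun k => (this k).symm) ?_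
    exact tendsto_finset_sum _ fun l _ =>
      epsaux_int (F l) β ψ hψmeas hψnonneg (hint l) (hzero l)
  -- the normalizing sequence θ
  set θ : ℕ → ℝ := fun k => φ (δ k) ^ (1 / p) + δ k with hθdef
  have hθpos : ∀ k, 0 < θ k := fun k =>
    add_pos_of_nonneg_of_pos (Real.rpow_nonneg (hφnonneg _) _) (hδpos k)
  have hθ0 : Tendsto θ atTop (𝓝 0) := by
    have h1 : Tendsto (fun k => φ (δ k) ^ (1 / p)) atTop (𝓝 0) := by
      have := hφδ.rpow_const (p := 1 / p) (Or.inr (by positivity))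
      rwa [Real.zero_rpow (by positivity : (1:ℝ)/p ≠ 0)] at this
    have := h1.add hδ0
    rwa [add_zero] at this
  have hφθ : ∀ k, φ (δ k) ≤ θ k ^ p := by
    intro k
    have h1 : φ (δ k) = (φ (δ k) ^ (1 / p)) ^ p := by
      rw [← Real.rpow_mul (hφnonneg _), one_div, inv_mul_cancel₀ hp.ne', Real.rpow_one]
    rw [h1]
    exact Real.rpow_le_rpow (Real.rpow_nonneg (hφnonneg _) _)
      (le_add_of_nonneg_right (hδpos k).le) hp.le
  -- the index sequence K
  set c : ℕ → ℝ := fun k => δ k ^ 3 with hcdef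
  have hcpos : ∀ k, 0 < c k := fun k => by positivity
  set K : ℕ → ℕ := fun n => Nat.findGreatest (fun k => ρ n ≤ c k) n with hKdef
  have hKtop : Tendsto K atTop atTop := by
    rw [tendsto_atTop]
    intro k₀
    filter_upwards [hρ.eventually_le_const (hcpos k₀), eventually_ge_atTop k₀]
      with n h1 h2
    exact Nat.le_findGreatest h2 h1
  have hKP : ∀ᶠ n in atTop, ρ n ≤ c (K n) := by
    filter_upwards [hρ.eventually_le_const (hcpos 1), eventually_ge_atTop 1]
      with n h1 h2
    exact Nat.findGreatest_spec (P := fun k => ρ n ≤ c k) h2 h1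
  -- the sequence ε
  set ε : ℕ → ℝ := fun n => min (δ (K n)) (Real.sqrt (ρ n / θ (K n))) with hεdef
  have hεpos : ∀ n, 0 < ε n := fun n =>
    lt_min (hδpos _) (Real.sqrt_pos.2 (div_pos (hρpos n) (hθpos _)))
  have hεδ : ∀ n, ε n ≤ δ (K n) := fun n => min_le_left _ _
  have hεsq : ∀ n, ε n ^ 2 ≤ ρ n / θ (K n) := by
    intro n
    have h := min_le_right (δ (K n)) (Real.sqrt (ρ n / θ (K n)))
    calc ε n ^ 2 ≤ Real.sqrt (ρ n / θ (K n)) ^ 2 :=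
          pow_le_pow_left₀ (hεpos n).le h 2
      _ = ρ n / θ (K n) := Real.sq_sqrt (div_pos (hρpos n) (hθpos _)).le
  refine ⟨ε, fun n => ⟨hεpos n, (hεδ n).trans (hδle1 _)⟩, ?_, ?_, ?_⟩
  · -- limsup bound
    refine limsup_le_of_le (isCoboundedUnder_le_of_le atTop (x := 0) (fun n =>
        mul_nonneg (Real.rpow_nonneg (mul_nonneg (inv_nonneg.2 (hρpos n).le) (sq_nonneg _)) _) (hφnonneg _)))
      (Filter.Eventually.of_forall fun n => ?_)
    have h1 : (ρ n)⁻¹ * ε n ^ 2 ≤ (θ (K n))⁻¹ := by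
        rw [inv_mul_le_iff₀ (hρpos n)]
        calc ε n ^ 2 ≤ ρ n / θ (K n) := hεsq n
          _ = ρ n * (θ (K n))⁻¹ := div_eq_mul_inv _ _
    have h2 : ((ρ n)⁻¹ * ε n ^ 2) ^ p ≤ (θ (K n))⁻¹ ^ p :=
      Real.rpow_le_rpow (mul_nonneg (inv_nonneg.2 (hρpos n).le) (sq_nonneg _)) h1 hp.le
    have h3 : φ (ε n) ≤ θ (K n) ^ p := (hφmono _ _ (hεδ n)).trans (hφθ _)
    calc ((ρ n)⁻¹ * ε n ^ 2) ^ p * φ (ε n)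
        ≤ (θ (K n))⁻¹ ^ p * θ (K n) ^ p :=
          mul_le_mul h2 h3 (hφnonneg _) (Real.rpow_nonneg (inv_nonneg.2 (hθpos _).le) _)
      _ = ((θ (K n))⁻¹ * θ (K n)) ^ p :=
          (Real.mul_rpow (inv_nonneg.2 (hθpos _).le) (hθpos _).le).symm
      _ = 1 := by rw [inv_mul_cancel₀ (hθpos _).ne', Real.one_rpow]
  · -- φ (ε n) → 0
    refine squeeze_zero (fun n => hφnonneg _) (fun n => hφmono _ _ (hεδ n)) ?_
    exact hφδ.comp hKtop
  · -- √ρ / ε → 0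
    have hbound : Tendsto
        (fun n => Real.sqrt (δ (K n)) + Real.sqrt (θ (K n))) atTop (𝓝 0) := by
      have h1 : Tendsto (fun n => Real.sqrt (δ (K n))) atTop (𝓝 0) := by
        have := (hδ0.comp hKtop).sqrt
        rwa [Real.sqrt_zero] at this
      have h2 : Tendsto (fun n => Real.sqrt (θ (K n))) atTop (𝓝 0) := by
        have := (hθ0.comp hKtop).sqrt
        rwa [Real.sqrt_zero] at this
      have := h1.add h2
      rwa [add_zero] at this
    refine squeeze_zero' (Filter.Eventually.of_forall fun n => by positivity)
      ?_ hbound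
    filter_upwards [hKP] with n hc
    have hρn := hρpos n
    have hθn := hθpos (K n)
    have hδn := hδpos (K n)
    have ha : Real.sqrt (ρ n) / δ (K n) ≤ Real.sqrt (δ (K n)) := by
      rw [div_le_iff₀ hδn]
      calc Real.sqrt (ρ n) ≤ Real.sqrt (δ (K n) ^ 3) := Real.sqrt_le_sqrt hc
        _ = Real.sqrt (δ (K n)) * δ (K n) := by
            rw [pow_succ, Real.sqrt_mul (by positivity), Real.sqrt_sq hδn.le,
              mul_comm]
    have hb : Real.sqrt (ρ n) / Real.sqrt (ρ n / θ (K n)) = Real.sqrt (θ (K n)) := by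
      rw [Real.sqrt_div hρn.le, div_div_eq_mul_div]
      exact mul_div_cancel_left₀ _ (by positivity)
    rcases min_cases (δ (K n)) (Real.sqrt (ρ n / θ (K n))) with ⟨hmin, _⟩ | ⟨hmin, _⟩ <;>
      rw [hεdef] <;> simp only [] <;> rw [hmin]
    · calc Real.sqrt (ρ n) / δ (K n) ≤ Real.sqrt (δ (K n)) := ha
        _ ≤ _ := le_add_of_nonneg_right (Real.sqrt_nonneg _)
    · rw [hb]
      exact le_add_of_nonneg_left (Real.sqrt_nonneg _)
end

section
/- Let Ω be a measurable space equipped with a filtration (F_t)_{t∈[0,∞)}, let δ > 0, and define the delayed filtration G_t := F_{(t−δ)₊} for t ≥ 0 (where (x)₊ = max(x,0)). Let σ be a stopping time with respect to (F_t), let ρ be a stopping time with respect to (G_t), let B be an event belonging to the σ-algebra G_ρ of events prior to ρ (with respect to the filtration G) such that B ⊆ {ρ ≤ σ + δ}, and let H : Ω → ℝ be a G_ρ-measurable random variable. Then the random variable H · 1_B is measurable with respect to the σ-algebra F_σ of events prior to σ (with respect to the filtration F). -/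
open MeasureTheory Filter Topology
open scoped NNReal ENNReal

/-- Abstract form of Lemma `barKssp`: measurability, with respect to the σ-algebra of events
prior to an `F`-stopping time `σ`, of `H · 1_B` for `H` measurable with respect to events prior
to a stopping time `ρ` of the delayed filtration `G_t = F_{(t-δ)₊}`, when `B ⊆ {ρ ≤ σ + δ}`. -/
theorem stmt3 {Ω : Type*} {m : MeasurableSpace Ω}
    (F : Filtration ℝ≥0 m) (δ : ℝ≥0) (hδ : 0 < δ)
    (G : Filtration ℝ≥0 m) (hG : ∀ t, G t = F (t - δ))
    (σ ρ : Ω → ℝ≥0) (hσ : IsStoppingTime F (fun ω => (σ ω : WithTop ℝ≥0)))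
    (hρ : IsStoppingTime G (fun ω => (ρ ω : WithTop ℝ≥0)))
    (B : Set Ω) (hB : MeasurableSet[hρ.measurableSpace] B)
    (hBsub : B ⊆ {ω | ρ ω ≤ σ ω + δ})
    (H : Ω → ℝ) (hH : Measurable[hρ.measurableSpace] H) :
    Measurable[hσ.measurableSpace] (B.indicator H) := by
  -- Key fact: any `G_ρ`-measurable subset of `B` is `F_σ`-measurable.
  have key : ∀ A : Set Ω, MeasurableSet[hρ.measurableSpace] A → A ⊆ B →
      MeasurableSet[hσ.measurableSpace] A := by
    intro A hA hAB
    refine ⟨?_, fun u => ?_⟩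
    · have hle : (⨆ t, (G t : MeasurableSpace Ω)) ≤ ⨆ t, (F t : MeasurableSpace Ω) :=
        iSup_le fun t => by rw [hG t]; exact le_iSup (fun s => (F s : MeasurableSpace Ω)) (t - δ)
      exact hle _ hA.1
    have hEq : A ∩ {ω | (σ ω : WithTop ℝ≥0) ≤ u} = (A ∩ {ω | (ρ ω : WithTop ℝ≥0) ≤ ((u + δ : ℝ≥0) : WithTop ℝ≥0)}) ∩ {ω | (σ ω : WithTop ℝ≥0) ≤ u} := by
      ext ω
      constructor
      · rintro ⟨hωA, hωσ⟩
        refine ⟨⟨hωA, ?_⟩, hωσ⟩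
        exact WithTop.coe_le_coe.mpr (le_trans (hBsub (hAB hωA)) (add_le_add_left (WithTop.coe_le_coe.mp hωσ) δ))
      · rintro ⟨⟨hωA, _⟩, hωσ⟩
        exact ⟨hωA, hωσ⟩
    rw [hEq]
    have h1 : MeasurableSet[G (u + δ)] (A ∩ {ω | (ρ ω : WithTop ℝ≥0) ≤ ((u + δ : ℝ≥0) : WithTop ℝ≥0)}) := hA.2 (u + δ)
    have h2 : MeasurableSet[F u] (A ∩ {ω | (ρ ω : WithTop ℝ≥0) ≤ ((u + δ : ℝ≥0) : WithTop ℝ≥0)}) := by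
      rw [hG (u + δ), add_tsub_cancel_right] at h1
      exact h1
    exact h2.inter (hσ u)
  have hBσ : MeasurableSet[hσ.measurableSpace] B := key B hB subset_rfl
  intro t ht
  by_cases h0 : (0 : ℝ) ∈ t
  · have hEq : B.indicator H ⁻¹' t = (B ∩ H ⁻¹' t) ∪ Bᶜ := by
      ext ω
      by_cases hω : ω ∈ B <;>
        simp [Set.indicator_apply, hω, h0]
    rw [hEq]
    exact (key _ (hB.inter (hH ht)) Set.inter_subset_left).union hBσ.compl
  · have hEq : B.indicator H ⁻¹' t = B ∩ H ⁻¹' t := by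
      ext ω
      by_cases hω : ω ∈ B <;>
        simp [Set.indicator_apply, hω, h0]
    rw [hEq]
    exact key _ (hB.inter (hH ht)) Set.inter_subset_left
end
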